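/- arXiv:1010.5045 — 3 statements merged into one kernel-verified Lean document; each statement's English description precedes it below -/
import Mathlib

section
/- Let $\tau_{i,1}^{(N)}$, $i=1,\dots,N$, be independent random variables with $\mathbb{P}[\tau_{i,1}^{(N)} > t] = e^{-\rho_i^{(N)}((0,t])}$ (the first jump time of a Poisson random measure with continuous intensity $\rho_i^{(N)}$). Fix $t\ge 0$ and assume the empirical distributions $\lambda_t^{(N)} = \frac1N\sum_{i=1}^N \delta_{\rho_i^{(N)}((0,t])}$ on $[0,\infty)$ converge weakly to a probability distribution $\lambda_t$. Then $Y_C^{(N)}(t) := \frac1N\sum_{i=1}^N \mathbf{1}\{\tau_{i,1}^{(N)} \le t\}$ converges almost surely as $N\to\infty$ to $y_C(t) = 1 - \int_0^\infty e^{-s}\,\lambda_t(ds)$. -/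
open MeasureTheory Filter

open ProbabilityTheory

lemma aux_integrable_of_bound {Ω : Type*} [MeasurableSpace Ω] (μ : Measure Ω)
    [IsProbabilityMeasure μ] (f : Ω → ℝ) (hf : Measurable f) (C : ℝ) (h : ∀ ω, |f ω| ≤ C) :
    Integrable f μ :=
  (integrable_const C).mono' hf.aestronglyMeasurable
    (Filter.Eventually.of_forall (by simpa [Real.norm_eq_abs] using h))

lemma aux_moment4 {Ω : Type*} [MeasurableSpace Ω] (μ : Measure Ω) [IsProbabilityMeasure μ]
    {n : ℕ} (Z : Fin n → Ω → ℝ) (hmeas : ∀ i, Measurable (Z i))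
    (hbd : ∀ i ω, |Z i ω| ≤ 1) (hcent : ∀ i, ∫ ω, Z i ω ∂μ = 0)
    (hindep : iIndepFun Z μ) :
    ∫ ω, (∑ i, Z i ω) ^ 4 ∂μ ≤ 3 * (n : ℝ) ^ 2 := by
  suffices H : ∀ s : Finset (Fin n),
      (∫ ω, (∑ i ∈ s, Z i ω) ∂μ = 0) ∧
      (∫ ω, (∑ i ∈ s, Z i ω) ^ 2 ∂μ ≤ (s.card : ℝ)) ∧
      (∫ ω, (∑ i ∈ s, Z i ω) ^ 4 ∂μ ≤ 3 * (s.card : ℝ) ^ 2) by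
    have := (H Finset.univ).2.2
    simpa using this
  intro s
  induction s using Finset.cons_induction with
  | empty => simp
  | cons k s hk IH =>
    obtain ⟨IH1, IH2, IH4⟩ := IH
    set S : Ω → ℝ := fun ω => ∑ i ∈ s, Z i ω with hSdef
    have hSmeas : Measurable S := Finset.measurable_sum s (fun i _ => hmeas i)
    have hSbd : ∀ ω, |S ω| ≤ (s.card : ℝ) := by
      intro ω
      calc |S ω| ≤ ∑ i ∈ s, |Z i ω| := Finset.abs_sum_le_sum_abs _ _
        _ ≤ ∑ i ∈ s, (1 : ℝ) := Finset.sum_le_sum (fun i _ => hbd i ω)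
        _ = (s.card : ℝ) := by simp
    have hSeq : (∑ i ∈ s, Z i) = S := by funext ω; simp [hSdef]
    have hI : IndepFun S (Z k) μ := by
      have := hindep.indepFun_finsetSum_of_notMem hmeas hk
      rwa [hSeq] at this
    have hIab : ∀ a b : ℕ, IndepFun (fun ω => S ω ^ a) (fun ω => Z k ω ^ b) μ := fun a b =>
      hI.comp (measurable_id.pow_const a) (measurable_id.pow_const b)
    have intS : ∀ a : ℕ, Integrable (fun ω => S ω ^ a) μ := by
      intro a
      refine aux_integrable_of_bound μ _ (hSmeas.pow_const a) ((s.card : ℝ) ^ a) (fun ω => ?_)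
      rw [abs_pow]
      exact pow_le_pow_left₀ (abs_nonneg _) (hSbd ω) a
    have intZ : ∀ b : ℕ, Integrable (fun ω => Z k ω ^ b) μ := by
      intro b
      refine aux_integrable_of_bound μ _ ((hmeas k).pow_const b) 1 (fun ω => ?_)
      rw [abs_pow]
      exact pow_le_one₀ (abs_nonneg _) (hbd k ω)
    have intSZ : ∀ a b : ℕ, Integrable (fun ω => S ω ^ a * Z k ω ^ b) μ := by
      intro a b
      refine aux_integrable_of_bound μ _ ((hSmeas.pow_const a).mul ((hmeas k).pow_const b))
        ((s.card : ℝ) ^ a) (fun ω => ?_)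
      rw [abs_mul, abs_pow, abs_pow]
      calc |S ω| ^ a * |Z k ω| ^ b ≤ (s.card : ℝ) ^ a * 1 := by
            exact mul_le_mul (pow_le_pow_left₀ (abs_nonneg _) (hSbd ω) a)
              (pow_le_one₀ (abs_nonneg _) (hbd k ω)) (pow_nonneg (abs_nonneg _) _)
              (pow_nonneg (Nat.cast_nonneg _) _)
        _ = (s.card : ℝ) ^ a := mul_one _
    have hmulint : ∀ a b : ℕ, ∫ ω, S ω ^ a * Z k ω ^ b ∂μ =
        (∫ ω, S ω ^ a ∂μ) * ∫ ω, Z k ω ^ b ∂μ := fun a b =>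
      (hIab a b).integral_fun_mul_eq_mul_integral (intS a).aestronglyMeasurable
        (intZ b).aestronglyMeasurable
    have hsum : ∀ ω, ∑ i ∈ Finset.cons k s hk, Z i ω = S ω + Z k ω := by
      intro ω; rw [Finset.sum_cons]; ring
    have hZ1 : ∫ ω, Z k ω ∂μ = 0 := hcent k
    have hS1 : ∫ ω, S ω ∂μ = 0 := IH1
    have hZ2le : ∫ ω, Z k ω ^ 2 ∂μ ≤ 1 := by
      calc ∫ ω, Z k ω ^ 2 ∂μ ≤ ∫ _ω, (1 : ℝ) ∂μ := by
            refine integral_mono (intZ 2) (integrable_const 1) (fun ω => ?_)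
            have := hbd k ω
            nlinarith [abs_nonneg (Z k ω), sq_abs (Z k ω)]
        _ = 1 := by simp
    have hZ4le : ∫ ω, Z k ω ^ 4 ∂μ ≤ 1 := by
      calc ∫ ω, Z k ω ^ 4 ∂μ ≤ ∫ _ω, (1 : ℝ) ∂μ := by
            refine integral_mono (intZ 4) (integrable_const 1) (fun ω => ?_)
            have h1 := hbd k ω
            have h2 : |Z k ω| ^ 4 ≤ 1 := pow_le_one₀ (abs_nonneg _) h1
            calc Z k ω ^ 4 = |Z k ω| ^ 4 := by rw [← abs_pow, abs_of_nonneg (by positivity)]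
              _ ≤ 1 := h2
        _ = 1 := by simp
    have hZ2nn : 0 ≤ ∫ ω, Z k ω ^ 2 ∂μ := integral_nonneg (fun ω => by positivity)
    have hS2nn : 0 ≤ ∫ ω, S ω ^ 2 ∂μ := integral_nonneg (fun ω => by positivity)
    have intS1 : Integrable S μ := by simpa using intS 1
    have intZ1 : Integrable (Z k) μ := by simpa using intZ 1
    have IH2' : ∫ ω, S ω ^ 2 ∂μ ≤ (s.card : ℝ) := IH2
    have IH4' : ∫ ω, S ω ^ 4 ∂μ ≤ 3 * (s.card : ℝ) ^ 2 := IH4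
    have hZ1' : ∫ ω, Z k ω ^ 1 ∂μ = 0 := by simpa using hZ1
    have hS1' : ∫ ω, S ω ^ 1 ∂μ = 0 := by simpa using hS1
    have hcard : ((Finset.cons k s hk).card : ℝ) = (s.card : ℝ) + 1 := by
      rw [Finset.card_cons]; push_cast; ring
    refine ⟨?_, ?_, ?_⟩
    · simp only [hsum]
      rw [integral_add intS1 intZ1, hS1, hZ1, add_zero]
    · have e2 : ∀ ω, (S ω + Z k ω) ^ 2
          = S ω ^ 2 + (2 * (S ω ^ 1 * Z k ω ^ 1) + Z k ω ^ 2) := by intro ω; ring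
      simp only [hsum, e2]
      have j1 : Integrable (fun ω => 2 * (S ω ^ 1 * Z k ω ^ 1)) μ := (intSZ 1 1).const_mul 2
      have j2 : Integrable (fun ω => 2 * (S ω ^ 1 * Z k ω ^ 1) + Z k ω ^ 2) μ := j1.add (intZ 2)
      rw [integral_add (intS 2) j2, integral_add j1 (intZ 2),
        integral_const_mul, hmulint 1 1, hS1', hcard]
      nlinarith [hZ2le, IH2']
    · have e4 : ∀ ω, (S ω + Z k ω) ^ 4
          = S ω ^ 4 + (4 * (S ω ^ 3 * Z k ω ^ 1) + (6 * (S ω ^ 2 * Z k ω ^ 2)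
            + (4 * (S ω ^ 1 * Z k ω ^ 3) + Z k ω ^ 4))) := by intro ω; ring
      simp only [hsum, e4]
      have k1 : Integrable (fun ω => 4 * (S ω ^ 3 * Z k ω ^ 1)) μ := (intSZ 3 1).const_mul 4
      have k2 : Integrable (fun ω => 6 * (S ω ^ 2 * Z k ω ^ 2)) μ := (intSZ 2 2).const_mul 6
      have k3 : Integrable (fun ω => 4 * (S ω ^ 1 * Z k ω ^ 3)) μ := (intSZ 1 3).const_mul 4
      have k4 : Integrable (fun ω => 4 * (S ω ^ 1 * Z k ω ^ 3) + Z k ω ^ 4) μ := k3.add (intZ 4)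
      have k5 : Integrable (fun ω => 6 * (S ω ^ 2 * Z k ω ^ 2)
          + (4 * (S ω ^ 1 * Z k ω ^ 3) + Z k ω ^ 4)) μ := k2.add k4
      have k6 : Integrable (fun ω => 4 * (S ω ^ 3 * Z k ω ^ 1) + (6 * (S ω ^ 2 * Z k ω ^ 2)
          + (4 * (S ω ^ 1 * Z k ω ^ 3) + Z k ω ^ 4))) μ := k1.add k5
      rw [integral_add (intS 4) k6, integral_add k1 k5, integral_add k2 k4,
        integral_add k3 (intZ 4),
        integral_const_mul, integral_const_mul, integral_const_mul,
        hmulint 3 1, hmulint 2 2, hmulint 1 3, hZ1', hS1', hcard]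
      nlinarith [hZ2le, hZ4le, hZ2nn, hS2nn, IH2', IH4', (Nat.cast_nonneg s.card : (0:ℝ) ≤ s.card)]

noncomputable def auxF : BoundedContinuousFunction ℝ ℝ :=
  ⟨⟨fun s => Real.exp (-(max s 0)), by continuity⟩, 2, fun x y => by
    have h1 := Real.exp_pos (-(max x 0))
    have h2 := Real.exp_pos (-(max y 0))
    have h3 : Real.exp (-(max x 0)) ≤ 1 :=
      Real.exp_le_one_iff.mpr (neg_nonpos.mpr (le_max_right x 0))
    have h4 : Real.exp (-(max y 0)) ≤ 1 :=
      Real.exp_le_one_iff.mpr (neg_nonpos.mpr (le_max_right y 0))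
    rw [Real.dist_eq, abs_le]
    constructor <;> simp only [ContinuousMap.coe_mk] <;> linarith⟩

lemma auxF_apply (x : ℝ) : auxF x = Real.exp (-(max x 0)) := rfl

/-- first jump times `τ N i` of independent Poisson random measures with
continuous intensities `ρ N i` satisfy `P[τ N i > t] = exp (-ρ N i ((0,t]))`.  If the
empirical distributions of the numbers `ρ N i ((0,t])` converge weakly to a probability
measure `lamt` on `[0,∞)`, then `Y_C^{(N)}(t) = (1/N) ∑ 1{τ N i ≤ t}` converges almost
surely to `y_C(t) = 1 - ∫ e^{-s} lamt(ds)`. -/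
theorem stmt1
    {Ω : Type*} [MeasurableSpace Ω] (μ : Measure Ω) [IsProbabilityMeasure μ]
    (t : ℝ) (ht : 0 ≤ t)
    (ρ : ℕ → ℕ → Measure ℝ)
    (hρfin : ∀ N i, ρ N i (Set.Ioc 0 t) ≠ ⊤)
    (hρcont : ∀ N i x, ρ N i {x} = 0)
    (τ : ℕ → ℕ → Ω → ℝ)
    (hτmeas : ∀ N i, Measurable (τ N i))
    (hτindep : ∀ N, ProbabilityTheory.iIndepFun
      (fun i : Fin N => τ N (i : ℕ)) μ)
    (hτlaw : ∀ N i, i < N →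
      μ {ω | t < τ N i ω} =
        ENNReal.ofReal (Real.exp (-((ρ N i (Set.Ioc 0 t)).toReal))))
    (lamt : Measure ℝ) [IsProbabilityMeasure lamt] (hlamsupp : lamt (Set.Iio 0) = 0)
    (hweak : ∀ f : BoundedContinuousFunction ℝ ℝ,
      Tendsto (fun N : ℕ =>
          (∑ i ∈ Finset.range N, f ((ρ N i (Set.Ioc 0 t)).toReal)) / N)
        atTop (nhds (∫ s, f s ∂lamt))) :
    ∀ᵐ ω ∂μ, Tendsto
      (fun N : ℕ =>
        (∑ i ∈ Finset.range N, if τ N i ω ≤ t then (1 : ℝ) else 0) / N)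
      atTop (nhds (1 - ∫ s, Real.exp (-s) ∂lamt)) := by
  classical
  set p : ℕ → ℕ → ℝ := fun N i => Real.exp (-((ρ N i (Set.Ioc 0 t)).toReal)) with hpdef
  have hppos : ∀ N i, 0 < p N i := fun N i => Real.exp_pos _
  have hple : ∀ N i, p N i ≤ 1 := fun N i =>
    Real.exp_le_one_iff.mpr (neg_nonpos.mpr ENNReal.toReal_nonneg)
  set Z : ℕ → ℕ → Ω → ℝ :=
    fun N i ω => (if τ N i ω ≤ t then (1 : ℝ) else 0) - (1 - p N i) with hZdef
  have hZmeas : ∀ N i, Measurable (Z N i) := by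
    intro N i
    exact ((Measurable.ite measurableSet_Iic measurable_const measurable_const).comp
      (hτmeas N i)).sub measurable_const
  have hZbd : ∀ N i ω, |Z N i ω| ≤ 1 := by
    intro N i ω
    have h1 := hppos N i
    have h2 := hple N i
    rw [hZdef]
    by_cases h : τ N i ω ≤ t <;> simp only [h, if_true, if_false, abs_le] <;>
      constructor <;> linarith
  have hZcent : ∀ N i, i < N → ∫ ω, Z N i ω ∂μ = 0 := by
    intro N i hiN
    have hXint : Integrable (fun ω => if τ N i ω ≤ t then (1 : ℝ) else 0) μ := by
      refine aux_integrable_of_bound μ _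
        ((Measurable.ite measurableSet_Iic measurable_const measurable_const).comp
          (hτmeas N i)) 1 (fun ω => ?_)
      by_cases h : τ N i ω ≤ t <;> simp [h]
    have hset : {ω | τ N i ω ≤ t} = {ω | t < τ N i ω}ᶜ := by
      ext ω; simp [not_lt]
    have hmeasset : MeasurableSet {ω | t < τ N i ω} :=
      measurableSet_lt measurable_const (hτmeas N i)
    have hμ : μ {ω | τ N i ω ≤ t} = 1 - ENNReal.ofReal (p N i) := by
      rw [hset, measure_compl hmeasset (measure_ne_top μ _), measure_univ, hτlaw N i hiN]
    have hXval : ∫ ω, (if τ N i ω ≤ t then (1 : ℝ) else 0) ∂μ = 1 - p N i := by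
      have hind : (fun ω => if τ N i ω ≤ t then (1 : ℝ) else 0)
          = Set.indicator {ω | τ N i ω ≤ t} (fun _ => (1 : ℝ)) := by
        funext ω; by_cases h : τ N i ω ≤ t <;>
          simp [Set.indicator_apply, Set.mem_setOf_eq, h]
      rw [hind, integral_indicator_const (1 : ℝ) (by rw [hset]; exact hmeasset.compl), measureReal_def, hμ,
        ENNReal.toReal_sub_of_le (ENNReal.ofReal_le_one.mpr (hple N i)) ENNReal.one_ne_top]
      simp [ENNReal.toReal_ofReal (hppos N i).le]
    rw [hZdef]
    simp only
    rw [integral_sub hXint (integrable_const _), hXval, integral_const]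
    simp
  have hZindep : ∀ N, ProbabilityTheory.iIndepFun
      (fun i : Fin N => Z N (i : ℕ)) μ := by
    intro N
    have := (hτindep N).comp
      (fun i : Fin N => fun x : ℝ => (if x ≤ t then (1 : ℝ) else 0) - (1 - p N (i : ℕ)))
      (fun i => (Measurable.ite measurableSet_Iic measurable_const measurable_const).sub
        measurable_const)
    exact this
  -- fourth moment bound
  have hM4 : ∀ N : ℕ, ∫ ω, (∑ i ∈ Finset.range N, Z N i ω) ^ 4 ∂μ ≤ 3 * (N : ℝ) ^ 2 := by
    intro N
    have := aux_moment4 μ (fun i : Fin N => Z N (i : ℕ))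
      (fun i => hZmeas N i) (fun i ω => hZbd N i ω)
      (fun i => hZcent N i i.isLt) (hZindep N)
    have hs : ∀ ω : Ω, (∑ i : Fin N, Z N (i : ℕ) ω) = ∑ i ∈ Finset.range N, Z N i ω :=
      fun ω => Fin.sum_univ_eq_sum_range (fun i => Z N i ω) N
    simp only [hs] at this
    simpa using this
  set a : ℕ → Ω → ℝ := fun N ω => (∑ i ∈ Finset.range N, Z N i ω) / N with hadef
  have hameas : ∀ N, Measurable (a N) :=
    fun N => (Finset.measurable_sum _ (fun i _ => hZmeas N i)).div_const _
  have habd : ∀ N ω, |a N ω| ≤ 1 := by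
    intro N ω
    rcases Nat.eq_zero_or_pos N with h | h
    · subst h; simp [hadef]
    · have hN : (0 : ℝ) < N := by exact_mod_cast h
      rw [hadef]
      simp only
      rw [abs_div, abs_of_pos hN, div_le_one hN]
      calc |∑ i ∈ Finset.range N, Z N i ω| ≤ ∑ i ∈ Finset.range N, |Z N i ω| :=
            Finset.abs_sum_le_sum_abs _ _
        _ ≤ ∑ _i ∈ Finset.range N, (1 : ℝ) := Finset.sum_le_sum (fun i _ => hZbd N i ω)
        _ = (N : ℝ) := by simp
  have hInt4 : ∀ N, Integrable (fun ω => (a N ω) ^ 4) μ := by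
    intro N
    refine aux_integrable_of_bound μ _ ((hameas N).pow_const 4) 1 (fun ω => ?_)
    rw [abs_pow]
    exact pow_le_one₀ (abs_nonneg _) (habd N ω)
  have hbound4 : ∀ N, ∫ ω, (a N ω) ^ 4 ∂μ ≤ 3 / (N : ℝ) ^ 2 := by
    intro N
    rcases Nat.eq_zero_or_pos N with h | h
    · subst h
      simp [hadef]
    · have hN : (0 : ℝ) < N := by exact_mod_cast h
      have e1 : ∀ ω, (a N ω) ^ 4 = (∑ i ∈ Finset.range N, Z N i ω) ^ 4 / (N : ℝ) ^ 4 := by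
        intro ω; rw [hadef]; simp only; rw [div_pow]
      simp only [e1]
      rw [integral_div]
      calc (∫ ω, (∑ i ∈ Finset.range N, Z N i ω) ^ 4 ∂μ) / (N : ℝ) ^ 4
          ≤ (3 * (N : ℝ) ^ 2) / (N : ℝ) ^ 4 := div_le_div_of_nonneg_right (hM4 N) (by positivity)
        _ = 3 / (N : ℝ) ^ 2 := by field_simp
  -- summability and a.e. convergence of a to 0
  have hsummable : Summable (fun N : ℕ => 3 / (N : ℝ) ^ 2) := by
    have := (Real.summable_one_div_nat_pow (p := 2)).mpr one_lt_two
    simpa [div_eq_mul_inv] using this.mul_left 3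
  have hlint : ∀ N, ∫⁻ ω, ENNReal.ofReal ((a N ω) ^ 4) ∂μ
      = ENNReal.ofReal (∫ ω, (a N ω) ^ 4 ∂μ) :=
    fun N => (ofReal_integral_eq_lintegral_ofReal (hInt4 N)
      (Filter.Eventually.of_forall (fun ω => by positivity))).symm
  have htsumfin : ∫⁻ ω, ∑' N, ENNReal.ofReal ((a N ω) ^ 4) ∂μ ≠ ⊤ := by
    rw [lintegral_tsum (fun N => (((hameas N).pow_const 4).ennreal_ofReal).aemeasurable)]
    have hle : ∑' N, ∫⁻ ω, ENNReal.ofReal ((a N ω) ^ 4) ∂μ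
        ≤ ∑' N : ℕ, ENNReal.ofReal (3 / (N : ℝ) ^ 2) := by
      refine ENNReal.tsum_le_tsum (fun N => ?_)
      rw [hlint N]
      exact ENNReal.ofReal_le_ofReal (hbound4 N)
    refine ne_top_of_le_ne_top ?_ hle
    rw [← ENNReal.ofReal_tsum_of_nonneg (fun N => by positivity) hsummable]
    exact ENNReal.ofReal_ne_top
  have haezero : ∀ᵐ ω ∂μ, Tendsto (fun N => a N ω) atTop (nhds 0) := by
    have hfin : ∀ᵐ ω ∂μ, ∑' N, ENNReal.ofReal ((a N ω) ^ 4) < ⊤ :=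
      ae_lt_top (Measurable.ennreal_tsum
        (fun N => ((hameas N).pow_const 4).ennreal_ofReal)) htsumfin
    filter_upwards [hfin] with ω hω
    have h0 : Tendsto (fun N => ENNReal.ofReal ((a N ω) ^ 4)) atTop (nhds 0) :=
      ENNReal.tendsto_atTop_zero_of_tsum_ne_top hω.ne
    have h4 : Tendsto (fun N => (a N ω) ^ 4) atTop (nhds 0) := by
      have := (ENNReal.tendsto_toReal (by simp)).comp h0
      simp only [Function.comp_def, ENNReal.toReal_zero] at this
      refine this.congr (fun N => ?_)
      rw [ENNReal.toReal_ofReal (by positivity)]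
    rw [Metric.tendsto_atTop] at h4 ⊢
    intro ε hε
    obtain ⟨M, hM⟩ := h4 (ε ^ 4) (by positivity)
    refine ⟨M, fun N hN => ?_⟩
    have := hM N hN
    rw [Real.dist_eq, sub_zero] at this ⊢
    have h5 : |a N ω| ^ 4 < ε ^ 4 := by
      rw [← abs_pow]
      calc |(a N ω) ^ 4| = (a N ω) ^ 4 := abs_of_nonneg (by positivity)
        _ ≤ |(a N ω) ^ 4| := le_abs_self _
        _ < ε ^ 4 := this
    exact lt_of_pow_lt_pow_left₀ 4 hε.le h5
  -- convergence of the means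
  have hFρ : ∀ N i, auxF ((ρ N i (Set.Ioc 0 t)).toReal) = p N i := by
    intro N i
    rw [auxF_apply, max_eq_left ENNReal.toReal_nonneg]
  have hmean : Tendsto (fun N : ℕ => (∑ i ∈ Finset.range N, p N i) / N) atTop
      (nhds (∫ s, Real.exp (-s) ∂lamt)) := by
    have h := hweak auxF
    have hint : ∫ s, auxF s ∂lamt = ∫ s, Real.exp (-s) ∂lamt := by
      refine integral_congr_ae ?_
      have hae : ∀ᵐ s ∂lamt, 0 ≤ s := by
        rw [ae_iff]
        refine measure_mono_null (fun s hs => ?_) hlamsupp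
        simpa [Set.mem_setOf_eq, not_le] using hs
      filter_upwards [hae] with s hs
      rw [auxF_apply, max_eq_left hs]
    rw [hint] at h
    simp only [hFρ] at h
    exact h
  set m : ℕ → ℝ := fun N => (∑ i ∈ Finset.range N, (1 - p N i)) / N with hmdef
  have hmtend : Tendsto m atTop (nhds (1 - ∫ s, Real.exp (-s) ∂lamt)) := by
    have heq : ∀ᶠ N : ℕ in atTop, 1 - (∑ i ∈ Finset.range N, p N i) / N = m N := by
      filter_upwards [eventually_ge_atTop 1] with N hN
      have hN' : (N : ℝ) ≠ 0 := by positivity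
      rw [hmdef]
      simp only
      rw [Finset.sum_sub_distrib, sub_div, Finset.sum_const, Finset.card_range]
      simp [hN']
    exact Tendsto.congr' heq (tendsto_const_nhds.sub hmean)
  -- conclusion
  filter_upwards [haezero] with ω hω
  have heq : ∀ N : ℕ, (∑ i ∈ Finset.range N, if τ N i ω ≤ t then (1 : ℝ) else 0) / N
      = a N ω + m N := by
    intro N
    rw [hadef, hmdef]
    simp only
    rw [← add_div, ← Finset.sum_add_distrib]
    congr 1
    refine Finset.sum_congr rfl (fun i _ => ?_)
    rw [hZdef]
    ring
  have := hω.add hmtend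
  rw [zero_add] at this
  exact this.congr (fun N => (heq N).symm)
end

section
/- Suppose for each $t\ge 0$ the empirical distributions $\lambda_t^{(N)}$ converge weakly to probability measures $\lambda_t$, and that $t\mapsto\lambda_t$ is continuous in the weak topology. Then for almost every sample point $\omega$, the nondecreasing functions $Y_C^{(N)}(\cdot)(\omega)$ converge pointwise in $t\in[0,\infty)$ to the continuous nondecreasing function $y_C(t)=1-\int_0^\infty e^{-s}\lambda_t(ds)$. -/
open MeasureTheory Filter ProbabilityTheory

section Aux

variable {Ω : Type*} [MeasurableSpace Ω] {μ : Measure Ω} [IsProbabilityMeasure μ]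

private lemma bdd_integrable'' {f : Ω → ℝ} (hf : Measurable f) (C : ℝ) (h : ∀ ω, |f ω| ≤ C) :
    Integrable f μ :=
  Integrable.mono' (integrable_const C) hf.aestronglyMeasurable
    (Filter.Eventually.of_forall fun ω => by rw [Real.norm_eq_abs]; exact h ω)

private lemma moment_bound' {ι : Type*} (Y : ι → Ω → ℝ) (hmeas : ∀ i, Measurable (Y i))
    (hindep : iIndepFun Y μ)
    (hbound : ∀ i ω, |Y i ω| ≤ 1) (hcent : ∀ i, ∫ ω, Y i ω ∂μ = 0)
    (s : Finset ι) :
    (∫ ω, (∑ i ∈ s, Y i ω) ^ 2 ∂μ ≤ s.card) ∧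
      (∫ ω, (∑ i ∈ s, Y i ω) ^ 4 ∂μ ≤ 3 * (s.card : ℝ) ^ 2) := by
  classical
  induction' s using Finset.induction_on with j s hj ih
  · simp
  have hSmeas : Measurable (fun ω => ∑ i ∈ s, Y i ω) := by
    exact Finset.measurable_sum s fun i _ => hmeas i
  have hSbdd : ∀ ω, |∑ i ∈ s, Y i ω| ≤ (s.card : ℝ) := fun ω =>
    (Finset.abs_sum_le_sum_abs _ _).trans <| by
      calc ∑ i ∈ s, |Y i ω| ≤ ∑ _i ∈ s, (1:ℝ) := Finset.sum_le_sum fun i _ => hbound i ω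
      _ = s.card := by simp
  set S : Ω → ℝ := fun ω => ∑ i ∈ s, Y i ω with hS
  set Z : Ω → ℝ := Y j with hZdef
  set c : ℝ := (s.card : ℝ) with hc
  have hc0 : 0 ≤ c := Nat.cast_nonneg _
  have hZS : IndepFun Z S μ := by
    have := (hindep.indepFun_finsetSum_of_notMem hmeas hj).symm
    have hfun : (∑ i ∈ s, Y i) = S := by funext ω; simp [hS]
    rwa [hfun] at this
  have hpow : ∀ a b : ℕ, ∫ ω, Z ω ^ a * S ω ^ b ∂μ =
      (∫ ω, Z ω ^ a ∂μ) * ∫ ω, S ω ^ b ∂μ := by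
    intro a b
    have h := (hZS.comp (measurable_id.pow_const a) (measurable_id.pow_const b)).integral_mul_eq_mul_integral
      ((hmeas j).pow_const a).aestronglyMeasurable (hSmeas.pow_const b).aestronglyMeasurable
    simpa [Function.comp] using h
  have hint : ∀ a b : ℕ, Integrable (fun ω => Z ω ^ a * S ω ^ b) μ := by
    intro a b
    refine bdd_integrable'' (((hmeas j).pow_const a).mul (hSmeas.pow_const b)) (1 * c ^ b) ?_
    intro ω
    rw [abs_mul, abs_pow, abs_pow]
    exact mul_le_mul (pow_le_one₀ (abs_nonneg _) (hbound j ω))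
      (pow_le_pow_left₀ (abs_nonneg _) (hSbdd ω) b) (by positivity) zero_le_one
  have hZint : ∀ a : ℕ, Integrable (fun ω => Z ω ^ a) μ := fun a =>
    bdd_integrable'' ((hmeas j).pow_const a) 1 fun ω => by
      rw [abs_pow]; exact pow_le_one₀ (abs_nonneg _) (hbound j ω)
  have hSint : ∀ b : ℕ, Integrable (fun ω => S ω ^ b) μ := fun b =>
    bdd_integrable'' (hSmeas.pow_const b) (c ^ b) fun ω => by
      rw [abs_pow]; exact pow_le_pow_left₀ (abs_nonneg _) (hSbdd ω) b
  have hZ1 : ∫ ω, Z ω ∂μ = 0 := hcent j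
  have hS1 : ∫ ω, S ω ∂μ = 0 := by
    rw [hS, integral_finset_sum s fun i _ => bdd_integrable'' (hmeas i) 1 (hbound i)]
    simp [hcent]
  have hZ2le : ∫ ω, Z ω ^ 2 ∂μ ≤ 1 := by
    calc ∫ ω, Z ω ^ 2 ∂μ ≤ ∫ _ω, (1:ℝ) ∂μ := by
          refine integral_mono (hZint 2) (integrable_const 1) fun ω => ?_
          have := hbound j ω
          nlinarith [abs_nonneg (Z ω), sq_abs (Z ω)]
      _ = 1 := by simp
  have hZ4le : ∫ ω, Z ω ^ 4 ∂μ ≤ 1 := by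
    calc ∫ ω, Z ω ^ 4 ∂μ ≤ ∫ _ω, (1:ℝ) ∂μ := by
          refine integral_mono (hZint 4) (integrable_const 1) fun ω => ?_
          have h1 := hbound j ω
          have h2 : |Z ω| ^ 4 ≤ 1 := pow_le_one₀ (abs_nonneg _) h1
          calc Z ω ^ 4 = |Z ω| ^ 4 := by rw [← abs_pow, abs_of_nonneg (by positivity)]
            _ ≤ 1 := h2
      _ = 1 := by simp
  have hZ2pos : 0 ≤ ∫ ω, Z ω ^ 2 ∂μ := integral_nonneg fun ω => by positivity
  have hS2pos : 0 ≤ ∫ ω, S ω ^ 2 ∂μ := integral_nonneg fun ω => by positivity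
  have hS2le : ∫ ω, S ω ^ 2 ∂μ ≤ c := ih.1
  have hS4le : ∫ ω, S ω ^ 4 ∂μ ≤ 3 * c ^ 2 := ih.2
  constructor
  · have he : (fun ω => (∑ i ∈ insert j s, Y i ω) ^ 2)
        = fun ω => Z ω ^ 2 + 2 * (Z ω ^ 1 * S ω ^ 1) + S ω ^ 2 := by
      funext ω
      rw [Finset.sum_insert hj]
      show (Z ω + S ω) ^ 2 = _
      ring
    have hJ1 : Integrable (fun ω => 2 * (Z ω ^ 1 * S ω ^ 1)) μ := (hint 1 1).const_mul 2
    have hI1 : Integrable (fun ω => Z ω ^ 2 + 2 * (Z ω ^ 1 * S ω ^ 1)) μ := (hZint 2).add hJ1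
    rw [he, integral_add hI1 (hSint 2), integral_add (hZint 2) hJ1, integral_const_mul, hpow]
    simp only [pow_one, hZ1, hS1, Finset.card_insert_of_notMem hj]
    push_cast
    nlinarith
  · have he : (fun ω => (∑ i ∈ insert j s, Y i ω) ^ 4)
        = fun ω => Z ω ^ 4 + 4 * (Z ω ^ 3 * S ω ^ 1) + 6 * (Z ω ^ 2 * S ω ^ 2)
            + 4 * (Z ω ^ 1 * S ω ^ 3) + S ω ^ 4 := by
      funext ω
      rw [Finset.sum_insert hj]
      show (Z ω + S ω) ^ 4 = _
      ring
    have hK1 : Integrable (fun ω => 4 * (Z ω ^ 3 * S ω ^ 1)) μ := (hint 3 1).const_mul 4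
    have hK2 : Integrable (fun ω => 6 * (Z ω ^ 2 * S ω ^ 2)) μ := (hint 2 2).const_mul 6
    have hK3 : Integrable (fun ω => 4 * (Z ω ^ 1 * S ω ^ 3)) μ := (hint 1 3).const_mul 4
    have hL1 : Integrable (fun ω => Z ω ^ 4 + 4 * (Z ω ^ 3 * S ω ^ 1)) μ := (hZint 4).add hK1
    have hL2 : Integrable
        (fun ω => Z ω ^ 4 + 4 * (Z ω ^ 3 * S ω ^ 1) + 6 * (Z ω ^ 2 * S ω ^ 2)) μ := hL1.add hK2
    have hL3 : Integrable (fun ω => Z ω ^ 4 + 4 * (Z ω ^ 3 * S ω ^ 1) + 6 * (Z ω ^ 2 * S ω ^ 2)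
        + 4 * (Z ω ^ 1 * S ω ^ 3)) μ := hL2.add hK3
    rw [he, integral_add hL3 (hSint 4), integral_add hL2 hK3, integral_add hL1 hK2,
      integral_add (hZint 4) hK1,
      integral_const_mul, integral_const_mul, integral_const_mul, hpow, hpow, hpow]
    simp only [pow_one, hZ1, hS1, Finset.card_insert_of_notMem hj]
    push_cast
    nlinarith

/-- The almost sure vanishing of the centered empirical mean, at a fixed time `t`. -/
private lemma fixed_time_aux
    (ρ : ℕ → ℕ → Measure ℝ)
    (τ : ℕ → ℕ → Ω → ℝ)
    (hτmeas : ∀ N i, Measurable (τ N i))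
    (hτindep : ∀ N, ProbabilityTheory.iIndepFun
      (fun i : Fin N => τ N (i : ℕ)) μ)
    (hτlaw : ∀ N i, i < N → ∀ t : ℝ, 0 ≤ t →
      μ {ω | t < τ N i ω} =
        ENNReal.ofReal (Real.exp (-((ρ N i (Set.Ioc 0 t)).toReal))))
    (t : ℝ) (ht : 0 ≤ t) :
    ∀ᵐ ω ∂μ, Tendsto (fun N : ℕ =>
      (∑ i ∈ Finset.range N, ((if τ N i ω ≤ t then (1:ℝ) else 0)
        - (1 - Real.exp (-((ρ N i (Set.Ioc 0 t)).toReal))))) / N) atTop (nhds 0) := by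
  set p : ℕ → ℕ → ℝ := fun N i => 1 - Real.exp (-((ρ N i (Set.Ioc 0 t)).toReal)) with hp
  set D : ℕ → Ω → ℝ := fun N ω =>
    ∑ i ∈ Finset.range N, ((if τ N i ω ≤ t then (1:ℝ) else 0) - p N i) with hD
  have hexp : ∀ N i, Real.exp (-((ρ N i (Set.Ioc 0 t)).toReal)) ≤ 1 := fun N i =>
    Real.exp_le_one_iff.mpr (neg_nonpos.mpr ENNReal.toReal_nonneg)
  have hexp0 : ∀ N i, 0 < Real.exp (-((ρ N i (Set.Ioc 0 t)).toReal)) := fun N i => Real.exp_pos _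
  -- measurability of D N
  have hDmeas : ∀ N, Measurable (D N) := by
    intro N
    refine Finset.measurable_sum _ fun i _ => Measurable.sub ?_ measurable_const
    exact Measurable.ite (measurableSet_le (hτmeas N i) measurable_const)
      measurable_const measurable_const
  have hDbdd : ∀ N ω, |D N ω| ≤ N := by
    intro N ω
    refine (Finset.abs_sum_le_sum_abs _ _).trans ?_
    calc ∑ i ∈ Finset.range N, |(if τ N i ω ≤ t then (1:ℝ) else 0) - p N i|
        ≤ ∑ _i ∈ Finset.range N, (1:ℝ) := by
          refine Finset.sum_le_sum fun i _ => ?_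
          rw [abs_sub_le_iff]
          constructor <;> split_ifs <;>
            simp only [hp] <;> nlinarith [hexp N i, hexp0 N i]
      _ = N := by simp
  -- fourth moment bound
  have key4 : ∀ N, ∫ ω, (D N ω) ^ 4 ∂μ ≤ 3 * (N : ℝ) ^ 2 := by
    intro N
    set Y : Fin N → Ω → ℝ := fun i ω => (if τ N (i:ℕ) ω ≤ t then (1:ℝ) else 0) - p N i with hY
    have hYmeas : ∀ i : Fin N, Measurable (Y i) := fun i =>
      Measurable.sub (Measurable.ite (measurableSet_le (hτmeas N i) measurable_const)
        measurable_const measurable_const) measurable_const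
    have hYindep : iIndepFun Y μ := by
      have := iIndepFun.comp (hτindep N)
        (fun i : Fin N => fun s : ℝ => (if s ≤ t then (1:ℝ) else 0) - p N i)
        (fun i => Measurable.sub (Measurable.ite measurableSet_Iic
          measurable_const measurable_const) measurable_const)
      exact this
    have hYbdd : ∀ (i : Fin N) ω, |Y i ω| ≤ 1 := by
      intro i ω
      rw [hY]
      simp only
      rw [abs_sub_le_iff]
      constructor <;> split_ifs <;>
        simp only [hp] <;> nlinarith [hexp N i, hexp0 N i]
    have hYcent : ∀ i : Fin N, ∫ ω, Y i ω ∂μ = 0 := by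
      intro i
      have hset : MeasurableSet {ω | τ N (i:ℕ) ω ≤ t} :=
        measurableSet_le (hτmeas N i) measurable_const
      have hcompl : {ω | τ N (i:ℕ) ω ≤ t} = {ω | t < τ N (i:ℕ) ω}ᶜ := by
        ext ω; simp [not_lt]
      have hmeas2 : MeasurableSet {ω | t < τ N (i:ℕ) ω} :=
        measurableSet_lt measurable_const (hτmeas N i)
      have hμ : μ {ω | τ N (i:ℕ) ω ≤ t}
          = 1 - ENNReal.ofReal (Real.exp (-((ρ N i (Set.Ioc 0 t)).toReal))) := by
        rw [hcompl, prob_compl_eq_one_sub hmeas2, hτlaw N i i.isLt t ht]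
      have hint1 : ∫ ω, (if τ N (i:ℕ) ω ≤ t then (1:ℝ) else 0) ∂μ
          = 1 - Real.exp (-((ρ N i (Set.Ioc 0 t)).toReal)) := by
        calc ∫ ω, (if τ N (i:ℕ) ω ≤ t then (1:ℝ) else 0) ∂μ
            = ∫ ω, Set.indicator {ω | τ N (i:ℕ) ω ≤ t} (1 : Ω → ℝ) ω ∂μ := by
              refine integral_congr_ae (Filter.Eventually.of_forall fun ω => ?_)
              simp [Set.indicator_apply]
          _ = (μ {ω | τ N (i:ℕ) ω ≤ t}).toReal := integral_indicator_one hset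
          _ = 1 - Real.exp (-((ρ N i (Set.Ioc 0 t)).toReal)) := by
              rw [hμ, ENNReal.toReal_sub_of_le (ENNReal.ofReal_le_one.mpr (hexp N i))
                ENNReal.one_ne_top]
              simp [ENNReal.toReal_ofReal (hexp0 N i).le]
      have : ∫ ω, Y i ω ∂μ
          = (∫ ω, (if τ N (i:ℕ) ω ≤ t then (1:ℝ) else 0) ∂μ) - p N i := by
        rw [hY]
        simp only
        rw [integral_sub (bdd_integrable'' (Measurable.ite (measurableSet_le (hτmeas N i)
          measurable_const) measurable_const measurable_const) 1
          (fun ω => by split_ifs <;> simp)) (integrable_const _)]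
        simp
      rw [this, hint1, hp]
      ring
    have := (moment_bound' Y hYmeas hYindep hYbdd hYcent Finset.univ).2
    have hsum : ∀ ω, D N ω = ∑ i : Fin N, Y i ω := by
      intro ω
      rw [hD]
      simp only
      rw [← Fin.sum_univ_eq_sum_range (fun i => ((if τ N i ω ≤ t then (1:ℝ) else 0) - p N i)) N]
    simp only [hsum]
    simpa using this
  -- Chebyshev-type bound
  have markov : ∀ (ε : ℝ), 0 < ε → ∀ N : ℕ,
      μ {ω | ε ≤ |D N ω| / N} ≤ ENNReal.ofReal (3 / (ε ^ 4 * N ^ 2)) := by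
    intro ε hε N
    rcases Nat.eq_zero_or_pos N with h0 | hN
    · subst h0
      have : {ω : Ω | ε ≤ |D 0 ω| / (0:ℕ)} = ∅ := by
        ext ω
        simp only [Set.mem_setOf_eq, Set.mem_empty_iff_false, iff_false, not_le,
          Nat.cast_zero, div_zero]
        exact hε
      rw [this]
      simp
    have hNpos : (0:ℝ) < N := by exact_mod_cast hN
    have hsub : {ω | ε ≤ |D N ω| / N} ⊆ {ω | (ε * N) ^ 4 ≤ (D N ω) ^ 4} := by
      intro ω hω
      simp only [Set.mem_setOf_eq] at hω ⊢
      have h1 : ε * N ≤ |D N ω| := by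
        rw [le_div_iff₀ hNpos] at hω; linarith
      calc (ε * N) ^ 4 ≤ |D N ω| ^ 4 :=
            pow_le_pow_left₀ (by positivity) h1 4
        _ = (D N ω) ^ 4 := by rw [← abs_pow, abs_of_nonneg (by positivity)]
    have hint : Integrable (fun ω => (D N ω) ^ 4) μ :=
      bdd_integrable'' ((hDmeas N).pow_const 4) ((N:ℝ)^4) fun ω => by
        rw [abs_pow]; exact pow_le_pow_left₀ (abs_nonneg _) (hDbdd N ω) 4
    have hmk := mul_meas_ge_le_integral_of_nonneg
      (Filter.Eventually.of_forall fun ω => by positivity : 0 ≤ᵐ[μ] fun ω => (D N ω)^4)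
      hint ((ε * N) ^ 4)
    have hle : (μ {ω | ε ≤ |D N ω| / N}).toReal ≤ 3 / (ε ^ 4 * N ^ 2) := by
      have h2 : (μ {ω | ε ≤ |D N ω| / N}).toReal
          ≤ (μ {ω | (ε * N)^4 ≤ (D N ω)^4}).toReal := by
        refine ENNReal.toReal_mono (measure_ne_top μ _) (measure_mono hsub)
      have h3 : (ε * N) ^ 4 * (μ {ω | (ε * N)^4 ≤ (D N ω)^4}).toReal ≤ 3 * (N:ℝ)^2 :=
        hmk.trans (key4 N)
      have h4 : (μ {ω | (ε * N)^4 ≤ (D N ω)^4}).toReal ≤ 3 * (N:ℝ)^2 / (ε * N)^4 := by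
        rw [le_div_iff₀ (by positivity)]
        linarith
      refine (h2.trans h4).trans (le_of_eq ?_)
      field_simp
    rw [ENNReal.le_ofReal_iff_toReal_le (measure_ne_top μ _) (by positivity)]
    exact hle
  -- Borel-Cantelli
  have bc : ∀ k : ℕ, ∀ᵐ ω ∂μ, ∀ᶠ N in atTop, ¬ (((k:ℝ)+1)⁻¹ ≤ |D N ω| / N) := by
    intro k
    set ε : ℝ := ((k:ℝ)+1)⁻¹ with hε
    have hεpos : 0 < ε := by positivity
    have hsummable : Summable (fun N : ℕ => 3 / (ε ^ 4 * (N:ℝ) ^ 2)) := by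
      have h := Real.summable_one_div_nat_pow.mpr (by norm_num : 1 < 2)
      have := h.mul_left (3 / ε ^ 4)
      refine this.congr fun N => ?_
      field_simp
    have htsum : (∑' N : ℕ, μ {ω | ε ≤ |D N ω| / N}) ≠ ⊤ := by
      refine ne_top_of_le_ne_top ?_ (ENNReal.tsum_le_tsum fun N => markov ε hεpos N)
      rw [← ENNReal.ofReal_tsum_of_nonneg (fun N => by positivity) hsummable]
      exact ENNReal.ofReal_ne_top
    have := ae_eventually_notMem htsum
    filter_upwards [this] with ω hω
    exact hω
  rw [← ae_all_iff] at bc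
  filter_upwards [bc] with ω hω
  rw [NormedAddCommGroup.tendsto_nhds_zero]
  intro ε hε
  obtain ⟨k, hk⟩ := exists_nat_one_div_lt hε
  have hk' : ((k:ℝ)+1)⁻¹ < ε := by
    rw [one_div] at hk; exact hk
  filter_upwards [hω k] with N hN
  rw [Real.norm_eq_abs]
  have : |D N ω / N| = |D N ω| / N := by
    rw [abs_div, Nat.abs_cast]
  rw [this]
  exact (not_le.mp hN).trans hk'

end Aux

/-- The bounded continuous function `s ↦ exp (-(max s 0))`. -/
noncomputable def gbcf : BoundedContinuousFunction ℝ ℝ :=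
  BoundedContinuousFunction.ofNormedAddCommGroup (fun s => Real.exp (-(max s 0)))
    (by continuity) 1
    (fun s => by
      rw [Real.norm_eq_abs, abs_of_pos (Real.exp_pos _)]
      exact Real.exp_le_one_iff.mpr (neg_nonpos.mpr (le_max_right s 0)))

lemma gbcf_apply (s : ℝ) : gbcf s = Real.exp (-(max s 0)) := rfl

/-- The test functions exhibiting that a weak limit of measures supported
on `[0, ∞)` is supported on `[0, ∞)`. -/
noncomputable def fneg (n : ℕ) : BoundedContinuousFunction ℝ ℝ :=
  BoundedContinuousFunction.ofNormedAddCommGroup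
    (fun s => min 1 (max (-(((n:ℝ)+1) * s)) 0))
    (continuous_const.min ((continuous_const.mul continuous_id).neg.max continuous_const)) 1
    (fun s => by
      rw [Real.norm_eq_abs, abs_of_nonneg (le_min zero_le_one (le_max_right _ _))]
      exact min_le_left _ _)

private lemma support_aux
    (lam : Measure ℝ) [IsProbabilityMeasure lam] (r : ℕ → ℕ → ℝ) (hr : ∀ N i, 0 ≤ r N i)
    (hweak : ∀ f : BoundedContinuousFunction ℝ ℝ,
      Tendsto (fun N : ℕ => (∑ i ∈ Finset.range N, f (r N i)) / N)
        atTop (nhds (∫ s, f s ∂lam))) :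
    (∫ s, Real.exp (-s) ∂lam) = ∫ s, gbcf s ∂lam := by
  have hnull : ∀ n : ℕ, lam (Set.Iic (-(((n:ℝ)+1)⁻¹))) = 0 := by
    intro n
    have hzero : ∫ s, fneg n s ∂lam = 0 := by
      refine tendsto_nhds_unique (hweak (fneg n)) ?_
      have : (fun N : ℕ => (∑ i ∈ Finset.range N, fneg n (r N i)) / N)
          = fun _ => 0 := by
        funext N
        rw [Finset.sum_eq_zero, zero_div]
        intro i _
        show min 1 (max (-(((n:ℝ)+1) * r N i)) 0) = 0
        rw [max_eq_right, min_eq_right zero_le_one]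
        simp only [neg_nonpos]
        have := hr N i
        positivity
      rw [this]
      exact tendsto_const_nhds
    set c : ℝ := -(((n:ℝ)+1)⁻¹) with hc
    have hind : (lam (Set.Iic c)).toReal ≤ ∫ s, fneg n s ∂lam := by
      calc (lam (Set.Iic c)).toReal
          = ∫ s, Set.indicator (Set.Iic c) (1 : ℝ → ℝ) s ∂lam :=
            (integral_indicator_one measurableSet_Iic).symm
        _ ≤ ∫ s, fneg n s ∂lam := by
            refine integral_mono ?_ ((fneg n).integrable _) fun s => ?_
            · exact (integrable_const 1).indicator measurableSet_Iic
            · rw [Set.indicator_apply]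
              split_ifs with hs
              · simp only [Set.mem_Iic] at hs
                show (1:ℝ) ≤ min 1 (max (-(((n:ℝ)+1) * s)) 0)
                refine le_min le_rfl (le_max_of_le_left ?_)
                rw [le_neg]
                calc ((n:ℝ)+1) * s ≤ ((n:ℝ)+1) * c := by
                      refine mul_le_mul_of_nonneg_left hs (by positivity)
                  _ = -1 := by
                      rw [hc]
                      field_simp
              · show (0:ℝ) ≤ min 1 (max (-(((n:ℝ)+1) * s)) 0)
                exact le_min zero_le_one (le_max_right _ _)
    rw [hzero] at hind
    have hfin : lam (Set.Iic c) ≠ ⊤ := measure_ne_top _ _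
    have h0 : (lam (Set.Iic c)).toReal = 0 :=
      le_antisymm hind ENNReal.toReal_nonneg
    exact (ENNReal.toReal_eq_zero_iff _).mp h0 |>.resolve_right hfin
  have hIio : lam (Set.Iio 0) = 0 := by
    have hsub : Set.Iio (0:ℝ) ⊆ ⋃ n : ℕ, Set.Iic (-(((n:ℝ)+1)⁻¹)) := by
      intro s hs
      simp only [Set.mem_Iio] at hs
      obtain ⟨n, hn⟩ := exists_nat_one_div_lt (show (0:ℝ) < -s by linarith)
      refine Set.mem_iUnion.mpr ⟨n, ?_⟩
      simp only [Set.mem_Iic]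
      rw [one_div] at hn
      linarith
    refine measure_mono_null hsub ?_
    exact measure_iUnion_null fun n => hnull n
  refine integral_congr_ae ?_
  rw [Filter.EventuallyEq, ae_iff]
  refine measure_mono_null (fun s hs => ?_) hIio
  simp only [Set.mem_setOf_eq] at hs
  simp only [Set.mem_Iio]
  by_contra hge
  push_neg at hge
  exact hs (by rw [gbcf_apply, max_eq_left hge])

/-- if the empirical distributions of `ρ N i ((0,t])` converge weakly to
probability measures `lam t` for every `t ≥ 0`, and `t ↦ lam t` is continuous in the weak
topology, then for almost every sample `ω` the nondecreasing functions
`Y_C^{(N)}(·)(ω)` converge pointwise on `[0,∞)` to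
`y_C(t) = 1 - ∫ e^{-s} (lam t)(ds)`. -/
theorem stmt2
    {Ω : Type*} [MeasurableSpace Ω] (μ : Measure Ω) [IsProbabilityMeasure μ]
    (ρ : ℕ → ℕ → Measure ℝ)
    (hρfin : ∀ N i t, ρ N i (Set.Ioc 0 t) ≠ ⊤)
    (hρcont : ∀ N i x, ρ N i {x} = 0)
    (τ : ℕ → ℕ → Ω → ℝ)
    (hτmeas : ∀ N i, Measurable (τ N i))
    (hτindep : ∀ N, ProbabilityTheory.iIndepFun
      (fun i : Fin N => τ N (i : ℕ)) μ)
    (hτlaw : ∀ N i, i < N → ∀ t : ℝ, 0 ≤ t →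
      μ {ω | t < τ N i ω} =
        ENNReal.ofReal (Real.exp (-((ρ N i (Set.Ioc 0 t)).toReal))))
    (lam : ℝ → ProbabilityMeasure ℝ)
    (hlamcont : ContinuousOn lam (Set.Ici 0))
    (hweak : ∀ t : ℝ, 0 ≤ t → ∀ f : BoundedContinuousFunction ℝ ℝ,
      Tendsto (fun N : ℕ =>
          (∑ i ∈ Finset.range N, f ((ρ N i (Set.Ioc 0 t)).toReal)) / N)
        atTop (nhds (∫ s, f s ∂(lam t : Measure ℝ)))) :
    ∀ᵐ ω ∂μ, ∀ t : ℝ, 0 ≤ t → Tendsto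
      (fun N : ℕ =>
        (∑ i ∈ Finset.range N, if τ N i ω ≤ t then (1 : ℝ) else 0) / N)
      atTop (nhds (1 - ∫ s, Real.exp (-s) ∂(lam t : Measure ℝ))) := by
  -- the limit function, expressed with the bounded continuous integrand
  set y : ℝ → ℝ := fun u => 1 - ∫ s, gbcf s ∂(lam u : Measure ℝ) with hy
  have hsupp : ∀ u : ℝ, 0 ≤ u →
      (∫ s, Real.exp (-s) ∂(lam u : Measure ℝ)) = ∫ s, gbcf s ∂(lam u : Measure ℝ) := by
    intro u hu
    exact support_aux (lam u : Measure ℝ) (fun N i => (ρ N i (Set.Ioc 0 u)).toReal)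
      (fun N i => ENNReal.toReal_nonneg) (hweak u hu)
  -- deterministic convergence of the means
  have hmean : ∀ u : ℝ, 0 ≤ u → Tendsto (fun N : ℕ =>
      (∑ i ∈ Finset.range N, (1 - Real.exp (-((ρ N i (Set.Ioc 0 u)).toReal)))) / N)
      atTop (nhds (y u)) := by
    intro u hu
    have h1 : Tendsto (fun N : ℕ => (N:ℝ)/N) atTop (nhds 1) := by
      refine Tendsto.congr' ?_ tendsto_const_nhds
      filter_upwards [eventually_ge_atTop 1] with N hN
      have : (0:ℝ) < N := by exact_mod_cast hN
      rw [div_self this.ne']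
    have h2 := hweak u hu gbcf
    have key := h1.sub h2
    rw [show (1 : ℝ) - ∫ s, gbcf s ∂(lam u : Measure ℝ) = y u from rfl] at key
    refine Tendsto.congr (fun N => ?_) key
    rw [← sub_div]
    congr 1
    rw [Finset.sum_sub_distrib]
    congr 1
    · simp
    · refine Finset.sum_congr rfl fun i _ => ?_
      rw [gbcf_apply, max_eq_left ENNReal.toReal_nonneg]
  -- almost sure convergence at every fixed rational time
  have hrat : ∀ᵐ ω ∂μ, ∀ q : ℚ, 0 ≤ (q:ℝ) → Tendsto (fun N : ℕ =>
      (∑ i ∈ Finset.range N, if τ N i ω ≤ (q:ℝ) then (1 : ℝ) else 0) / N)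
      atTop (nhds (y q)) := by
    rw [ae_all_iff]
    intro q
    by_cases hq : 0 ≤ (q:ℝ)
    · filter_upwards [fixed_time_aux ρ τ hτmeas hτindep hτlaw (q:ℝ) hq] with ω hω _
      have := hω.add (hmean (q:ℝ) hq)
      rw [zero_add] at this
      refine Tendsto.congr (fun N => ?_) this
      rw [← add_div]
      congr 1
      rw [Finset.sum_sub_distrib]
      ring
    · exact Filter.Eventually.of_forall fun ω hq' => absurd hq' hq
  -- continuity of the limit function on `[0, ∞)`
  have hycont : ContinuousOn y (Set.Ici 0) := by
    have hcont : Continuous fun ν : ProbabilityMeasure ℝ => ∫ s, gbcf s ∂(ν : Measure ℝ) :=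
      ProbabilityMeasure.continuous_integral_boundedContinuousFunction gbcf
    exact continuousOn_const.sub (hcont.comp_continuousOn hlamcont)
  -- monotonicity of the prelimit functions in `t`
  have hmono : ∀ (ω : Ω) (N : ℕ) (u v : ℝ), u ≤ v →
      (∑ i ∈ Finset.range N, if τ N i ω ≤ u then (1 : ℝ) else 0) / N
        ≤ (∑ i ∈ Finset.range N, if τ N i ω ≤ v then (1 : ℝ) else 0) / N := by
    intro ω N u v huv
    rw [div_eq_mul_inv, div_eq_mul_inv]
    refine mul_le_mul_of_nonneg_right ?_ (by positivity)
    refine Finset.sum_le_sum fun i _ => ?_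
    split_ifs with h1 h2
    · exact le_rfl
    · exact absurd (h1.trans huv) h2
    · exact zero_le_one
    · exact le_rfl
  -- conclusion
  filter_upwards [hrat] with ω hω
  intro t ht
  rw [hsupp t ht]
  rw [show (1 : ℝ) - ∫ s, gbcf s ∂(lam t : Measure ℝ) = y t from rfl]
  rw [Metric.tendsto_atTop]
  intro ε hε
  -- continuity of `y` at `t` within `[0, ∞)`
  have hyc : ContinuousWithinAt y (Set.Ici 0) t := hycont t ht
  rw [Metric.continuousWithinAt_iff] at hyc
  obtain ⟨δ, hδpos, hδ⟩ := hyc (ε/2) (by positivity)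
  -- choose rational points around `t`
  obtain ⟨q2, hq2a, hq2b⟩ := exists_rat_btwn (show t < t + δ by linarith)
  have hq2nn : (0:ℝ) ≤ (q2:ℝ) := ht.trans hq2a.le
  have hq2dist : dist (q2:ℝ) t < δ := by
    rw [Real.dist_eq, abs_of_pos (by linarith)]
    linarith
  have hyq2 : dist (y q2) (y t) < ε/2 := hδ hq2nn hq2dist
  have hexq1 : ∃ q1 : ℚ, 0 ≤ (q1:ℝ) ∧ (q1:ℝ) ≤ t ∧ dist (q1:ℝ) t < δ := by
    by_cases hcase : t < δ
    · exact ⟨0, by simp, by exact_mod_cast ht, by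
        rw [Rat.cast_zero, Real.dist_eq, abs_of_nonpos (by linarith)]
        linarith⟩
    · push_neg at hcase
      obtain ⟨q1, hq1a, hq1b⟩ := exists_rat_btwn (show t - δ < t by linarith)
      refine ⟨q1, by linarith, hq1b.le, ?_⟩
      rw [Real.dist_eq, abs_of_nonpos (by linarith)]
      linarith
  obtain ⟨q1, hq1nn, hq1le, hq1dist⟩ := hexq1
  have hyq1 : dist (y q1) (y t) < ε/2 := hδ hq1nn hq1dist
  -- the rational limits
  have hl1 := hω q1 hq1nn
  have hl2 := hω q2 hq2nn
  rw [Metric.tendsto_atTop] at hl1 hl2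
  obtain ⟨N1, hN1⟩ := hl1 (ε/2) (by positivity)
  obtain ⟨N2, hN2⟩ := hl2 (ε/2) (by positivity)
  refine ⟨max N1 N2, fun n hn => ?_⟩
  have h1 := hN1 n (le_trans (le_max_left _ _) hn)
  have h2 := hN2 n (le_trans (le_max_right _ _) hn)
  rw [Real.dist_eq] at h1 h2 hyq1 hyq2 ⊢
  have hm1 := hmono ω n (q1:ℝ) t hq1le
  have hm2 := hmono ω n t (q2:ℝ) hq2a.le
  rw [abs_lt] at h1 h2 hyq1 hyq2 ⊢
  constructor <;> [nlinarith [hm1]; nlinarith [hm2]]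
end

section
/- In the setting of the stochastic ranking process with intensity measures $\rho_i^{(N)}$: for fixed $0\le t_0\le t$, the quantity $Y_A^{(N)}(t_0,t)=\frac1N\sum_{i=1}^N\mathbf{1}\{\nu_i^{(N)}((t-t_0,t])>0\}$ converges almost surely as $N\to\infty$ to $y_A(t_0,t)=1-\int_{\mathcal{M}} e^{-\rho((t-t_0,t])}\,\Lambda(d\rho)$, provided $\lambda_{t-t_0,t}^{(N)}:=\frac1N\sum_i \delta_{\rho_i^{(N)}((t-t_0,t])}$ converges weakly to $\int_{\mathcal{M}}\delta_{\rho((t-t_0,t])}\Lambda(d\rho)$. -/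
open MeasureTheory Filter ProbabilityTheory Real


lemma mgf_le_of_bdd {Ω : Type*} [MeasurableSpace Ω] {μ : Measure Ω} [IsProbabilityMeasure μ]
    {Z : Ω → ℝ} (hZm : Measurable Z) (hZb : ∀ ω, |Z ω| ≤ 1) (hZ0 : ∫ ω, Z ω ∂μ = 0)
    {s : ℝ} (hs1 : |s| ≤ 1) :
    mgf Z μ s ≤ Real.exp ((3/4) * s^2) := by
  have hint : Integrable (fun ω => Real.exp (s * Z ω)) μ := by
    refine (integrable_const (Real.exp 1)).mono' ((hZm.const_mul s).exp.aestronglyMeasurable)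
      (ae_of_all _ fun ω => ?_)
    rw [Real.norm_eq_abs, abs_of_pos (Real.exp_pos _)]
    apply Real.exp_le_exp.2
    calc s * Z ω ≤ |s * Z ω| := le_abs_self _
    _ = |s| * |Z ω| := abs_mul _ _
    _ ≤ 1 * 1 := mul_le_mul hs1 (hZb ω) (abs_nonneg _) zero_le_one
    _ = 1 := one_mul 1
  have hZint : Integrable Z μ := by
    refine (integrable_const 1).mono' hZm.aestronglyMeasurable (ae_of_all _ fun ω => ?_)
    simpa using hZb ω
  have hpt : ∀ ω, Real.exp (s * Z ω) ≤ 1 + s * Z ω + (3/4) * s^2 := by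
    intro ω
    have hx : |s * Z ω| ≤ 1 := by
      rw [abs_mul]
      calc |s| * |Z ω| ≤ 1 * 1 := mul_le_mul hs1 (hZb ω) (abs_nonneg _) zero_le_one
      _ = 1 := one_mul 1
    have := Real.exp_bound hx (n := 2) (by norm_num)
    have h2 : ∑ i ∈ Finset.range 2, (s * Z ω) ^ i / (Nat.factorial i : ℝ) = 1 + s * Z ω := by
      simp [Finset.sum_range_succ, Nat.factorial]
    rw [h2] at this
    have h3 : |s * Z ω| ^ 2 * ((2 + 1 : ℕ) / ((Nat.factorial 2 : ℕ) * (2:ℕ) : ℝ)) =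
        (3/4) * (s * Z ω)^2 := by
      rw [sq_abs]; norm_num [Nat.factorial]; ring
    rw [h3] at this
    have h4 : (3/4) * (s * Z ω)^2 ≤ (3/4) * s^2 := by
      have : (s * Z ω)^2 ≤ s^2 * 1 := by
        rw [mul_pow]
        exact mul_le_mul_of_nonneg_left (by
          have := hZb ω
          calc Z ω ^ 2 = |Z ω|^2 := (sq_abs _).symm
          _ ≤ 1^2 := pow_le_pow_left₀ (abs_nonneg _) this 2
          _ = 1 := one_pow 2) (sq_nonneg s)
      nlinarith
    have := abs_le.1 this
    linarith [this.2]
  have hI : mgf Z μ s ≤ 1 + (3/4) * s^2 := by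
    have heq : (fun ω => 1 + s * Z ω + (3/4) * s^2) = fun ω => s * Z ω + (1 + (3/4) * s^2) := by
      funext ω; ring
    have : mgf Z μ s ≤ ∫ ω, (s * Z ω + (1 + (3/4) * s^2)) ∂μ := by
      refine integral_mono hint ((hZint.const_mul s).add (integrable_const _)) fun ω => ?_
      have := hpt ω; dsimp only; linarith
    rw [integral_add (hZint.const_mul s) (integrable_const _), MeasureTheory.integral_const_mul, hZ0,
      integral_const] at this
    simpa using this
  calc mgf Z μ s ≤ 1 + (3/4) * s^2 := hI
  _ ≤ Real.exp ((3/4) * s^2) := by linarith [Real.add_one_le_exp ((3/4) * s^2)]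

lemma tail_bound {Ω : Type*} [MeasurableSpace Ω] {μ : Measure Ω} [IsProbabilityMeasure μ]
    {N : ℕ} {Z : Fin N → Ω → ℝ} (hmeas : ∀ i, Measurable (Z i))
    (hindep : iIndepFun Z μ)
    (hb : ∀ i ω, |Z i ω| ≤ 1) (hm : ∀ i, ∫ ω, Z i ω ∂μ = 0)
    {ε : ℝ} (hε : 0 < ε) :
    (μ {ω | (N:ℝ) * ε ≤ ∑ i, Z i ω}).toReal ≤ Real.exp (-(min 1 ε * ε / 4) * N) := by
  set s : ℝ := min 1 ε with hs
  have hs0 : 0 < s := lt_min one_pos hε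
  have hs1 : s ≤ 1 := min_le_left _ _
  have hsε : s ≤ ε := min_le_right _ _
  have hSb : ∀ ω, |∑ i, Z i ω| ≤ N := fun ω => by
    calc |∑ i, Z i ω| ≤ ∑ i, |Z i ω| := Finset.abs_sum_le_sum_abs _ _
    _ ≤ ∑ _i : Fin N, (1:ℝ) := Finset.sum_le_sum fun i _ => hb i ω
    _ = N := by simp
  have hSmeas : Measurable fun ω => ∑ i, Z i ω := Finset.measurable_sum _ fun i _ => hmeas i
  have hint : Integrable (fun ω => Real.exp (s * ∑ i, Z i ω)) μ := by
    refine (integrable_const (Real.exp (s * N))).mono'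
      ((hSmeas.const_mul s).exp.aestronglyMeasurable) (ae_of_all _ fun ω => ?_)
    rw [Real.norm_eq_abs, abs_of_pos (Real.exp_pos _)]
    apply Real.exp_le_exp.2
    exact mul_le_mul_of_nonneg_left (le_trans (le_abs_self _) (hSb ω)) hs0.le
  have hcher := measure_ge_le_exp_mul_mgf (X := fun ω => ∑ i, Z i ω) (μ := μ)
    ((N:ℝ) * ε) hs0.le hint
  have hsum : mgf (fun ω => ∑ i, Z i ω) μ s = ∏ i, mgf (Z i) μ s := by
    have h := hindep.mgf_sum hmeas Finset.univ (t := s)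
    rw [← h]
    congr 1
    funext ω
    simp [Finset.sum_apply]
  have hprod : ∏ i, mgf (Z i) μ s ≤ Real.exp ((3/4) * s^2 * N) := by
    calc ∏ i, mgf (Z i) μ s ≤ ∏ _i : Fin N, Real.exp ((3/4) * s^2) :=
      Finset.prod_le_prod (fun i _ => mgf_nonneg) fun i _ =>
        mgf_le_of_bdd (hmeas i) (hb i) (hm i) (by rw [abs_of_pos hs0]; exact hs1)
    _ = Real.exp ((3/4) * s^2 * N) := by
      rw [Finset.prod_const, ← Real.exp_nat_mul]
      congr 1; simp [mul_comm]
  calc (μ {ω | (N:ℝ) * ε ≤ ∑ i, Z i ω}).toReal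
      ≤ Real.exp (-s * ((N:ℝ) * ε)) * mgf (fun ω => ∑ i, Z i ω) μ s := hcher
    _ ≤ Real.exp (-s * ((N:ℝ) * ε)) * Real.exp ((3/4) * s^2 * N) := by
        rw [hsum]; exact mul_le_mul_of_nonneg_left hprod (Real.exp_pos _).le
    _ = Real.exp ((-s * ε + (3/4) * s^2) * N) := by rw [← Real.exp_add]; ring_nf
    _ ≤ Real.exp (-(s * ε / 4) * N) := by
        apply Real.exp_le_exp.2
        apply mul_le_mul_of_nonneg_right _ (Nat.cast_nonneg N)
        nlinarith

/-- for fixed `0 ≤ t0 ≤ t`, the fraction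
`Y_A^{(N)}(t0,t) = (1/N) ∑ 1{ν_i^{(N)}((t-t0,t]) > 0}` of particles having jumped during
`(t-t0,t]` converges almost surely to `y_A(t0,t) = 1 - ∫_M e^{-ρ((t-t0,t])} Λ(dρ)`,
provided the empirical distributions of the numbers `ρ_i^{(N)}((t-t0,t])` converge weakly
to the corresponding pushforward of `Λ`.  Here `n N i` is the number of points of the
Poisson random measure `ν_i^{(N)}` in `(t-t0,t]`, so `P[n N i = 0] = e^{-ρ_i^{(N)}((t-t0,t])}`. -/
theorem stmt7
    {Ω : Type*} [MeasurableSpace Ω] (μ : Measure Ω) [IsProbabilityMeasure μ]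
    (t0 t : ℝ) (ht0 : 0 ≤ t0) (ht : t0 ≤ t)
    (ρ : ℕ → ℕ → Measure ℝ)
    (hρfin : ∀ N i, ρ N i (Set.Ioc (t - t0) t) ≠ ⊤)
    (hρcont : ∀ N i x, ρ N i {x} = 0)
    (n : ℕ → ℕ → Ω → ℕ)
    (hnmeas : ∀ N i, Measurable (n N i))
    (hnindep : ∀ N, ProbabilityTheory.iIndepFun
      (fun i : Fin N => n N (i : ℕ)) μ)
    (hnlaw : ∀ N i, i < N →
      μ {ω | n N i ω = 0} =
        ENNReal.ofReal (Real.exp (-((ρ N i (Set.Ioc (t - t0) t)).toReal))))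
    (Λ : Measure (Measure ℝ)) [IsProbabilityMeasure Λ]
    (hweak : ∀ f : BoundedContinuousFunction ℝ ℝ,
      Tendsto (fun N : ℕ =>
          (∑ i ∈ Finset.range N, f ((ρ N i (Set.Ioc (t - t0) t)).toReal)) / N)
        atTop (nhds (∫ ρ', f ((ρ' (Set.Ioc (t - t0) t)).toReal) ∂Λ))) :
    ∀ᵐ ω ∂μ, Tendsto
      (fun N : ℕ =>
        (∑ i ∈ Finset.range N, if 0 < n N i ω then (1 : ℝ) else 0) / N)
      atTop
      (nhds (1 - ∫ ρ', Real.exp (-((ρ' (Set.Ioc (t - t0) t)).toReal)) ∂Λ)) := by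
  classical
  set q : Set ℝ := Set.Ioc (t - t0) t with hq
  set p : ℕ → ℕ → ℝ := fun N i => Real.exp (-((ρ N i q).toReal)) with hp
  have hp_pos : ∀ N i, 0 < p N i := fun N i => Real.exp_pos _
  have hp_le : ∀ N i, p N i ≤ 1 := fun N i =>
    Real.exp_le_one_iff.2 (neg_nonpos.2 ENNReal.toReal_nonneg)
  -- the centered indicator variables
  set X : ℕ → ℕ → Ω → ℝ := fun N i ω => if 0 < n N i ω then 1 else 0 with hX
  set Z : ∀ N : ℕ, Fin N → Ω → ℝ := fun N i ω => X N i ω - (1 - p N i) with hZ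
  have hXmeas : ∀ N i, Measurable (X N i) := by
    intro N i
    have : X N i = (fun k : ℕ => if 0 < k then (1:ℝ) else 0) ∘ n N i := rfl
    rw [this]; exact measurable_from_top.comp (hnmeas N i)
  have hZmeas : ∀ N (i : Fin N), Measurable (Z N i) := fun N i =>
    (hXmeas N i).sub measurable_const
  have hZindep : ∀ N, iIndepFun (Z N) μ := by
    intro N
    have := (hnindep N).comp
      (fun i : Fin N => fun k : ℕ => (if 0 < k then (1:ℝ) else 0) - (1 - p N i))
      (fun i => measurable_from_top)
    exact this
  have hZbdd : ∀ N (i : Fin N) ω, |Z N i ω| ≤ 1 := by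
    intro N i ω
    have h1 := hp_pos N i
    have h2 := hp_le N i
    simp only [hZ, hX]
    split <;> (rw [abs_le]; constructor <;> nlinarith)
  -- mean of the indicator
  have hXmean : ∀ N i, i < N → ∫ ω, X N i ω ∂μ = 1 - p N i := by
    intro N i hiN
    have hms : MeasurableSet {ω | n N i ω = 0} := hnmeas N i (measurableSet_singleton 0)
    have hpos_eq : {ω | 0 < n N i ω} = {ω | n N i ω = 0}ᶜ := by
      ext ω; simp [Nat.pos_iff_ne_zero]
    have hμpos : μ {ω | 0 < n N i ω} = 1 - ENNReal.ofReal (p N i) := by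
      rw [hpos_eq, prob_compl_eq_one_sub hms, hnlaw N i hiN]
    have hind : X N i = Set.indicator {ω | 0 < n N i ω} (fun _ => (1:ℝ)) := by
      funext ω; simp [hX, Set.indicator_apply]
    rw [hind]
    rw [show (fun _ : Ω => (1:ℝ)) = (1 : Ω → ℝ) from rfl]
    rw [integral_indicator_one (hms.compl.congr hpos_eq.symm), measureReal_def, hμpos,
      ENNReal.toReal_sub_of_le (ENNReal.ofReal_le_one.2 (hp_le N i)) ENNReal.one_ne_top,
      ENNReal.toReal_one, ENNReal.toReal_ofReal (hp_pos N i).le]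
  have hXint : ∀ N i, Integrable (X N i) μ := by
    intro N i
    refine (integrable_const 1).mono' (hXmeas N i).aestronglyMeasurable (ae_of_all _ fun ω => ?_)
    simp only [hX]; split <;> simp
  have hZmean : ∀ N (i : Fin N), ∫ ω, Z N i ω ∂μ = 0 := by
    intro N i
    simp only [hZ]
    rw [integral_sub (hXint N i) (integrable_const _), integral_const,
      hXmean N i i.isLt]
    simp
  -- tail bounds for each ε > 0
  set T : ℕ → Ω → ℝ := fun N ω => ∑ i : Fin N, Z N i ω with hT
  have hBC : ∀ ε : ℝ, 0 < ε → ∀ᵐ ω ∂μ, ∀ᶠ N in atTop, |T N ω| < (N:ℝ) * ε := by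
    intro ε hε
    set c : ℝ := min 1 ε * ε / 4 with hc
    have hc_pos : 0 < c := by
      have := lt_min one_pos hε; positivity
    set B : ℕ → Set Ω := fun N => {ω | (N:ℝ) * ε ≤ |T N ω|} with hB
    have hbound : ∀ N, μ (B N) ≤ ENNReal.ofReal (2 * Real.exp (-c * N)) := by
      intro N
      have h1 := tail_bound (μ := μ) (hZmeas N) (hZindep N) (hZbdd N) (hZmean N) hε
      set Zneg : Fin N → Ω → ℝ := fun i ω => -(Z N i ω) with hZneg
      have hnegindep : iIndepFun Zneg μ := by
        have := (hnindep N).comp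
          (fun i : Fin N => fun k : ℕ => -((if 0 < k then (1:ℝ) else 0) - (1 - p N i)))
          (fun i => measurable_from_top)
        exact this
      have h2 : (μ {ω | (N:ℝ) * ε ≤ ∑ i, Zneg i ω}).toReal ≤ Real.exp (-c * N) := by
        refine tail_bound (μ := μ) (fun i => (hZmeas N i).neg) hnegindep
          (fun i ω => by show |-(Z N i ω)| ≤ 1; rw [abs_neg]; exact hZbdd N i ω)
          (fun i => by
            show ∫ ω, -(Z N i ω) ∂μ = 0
            rw [integral_neg, hZmean N i, neg_zero]) hε
      have hsub : B N ⊆ {ω | (N:ℝ) * ε ≤ ∑ i, Z N i ω} ∪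
          {ω | (N:ℝ) * ε ≤ ∑ i, Zneg i ω} := by
        intro ω hω
        rcases abs_cases (T N ω) with ⟨habs, _⟩ | ⟨habs, _⟩
        · left
          show (N:ℝ) * ε ≤ ∑ i, Z N i ω
          have h' : (N:ℝ) * ε ≤ |T N ω| := hω
          rw [habs] at h'
          exact h'
        · right
          show (N:ℝ) * ε ≤ ∑ i, (-(Z N i ω))
          rw [Finset.sum_neg_distrib]
          have h' : (N:ℝ) * ε ≤ |T N ω| := hω
          rw [habs] at h'
          exact h'
      calc μ (B N) ≤ μ ({ω | (N:ℝ) * ε ≤ ∑ i, Z N i ω} ∪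
            {ω | (N:ℝ) * ε ≤ ∑ i, Zneg i ω}) := measure_mono hsub
        _ ≤ μ {ω | (N:ℝ) * ε ≤ ∑ i, Z N i ω} +
            μ {ω | (N:ℝ) * ε ≤ ∑ i, Zneg i ω} := measure_union_le _ _
        _ ≤ ENNReal.ofReal (Real.exp (-c * N)) + ENNReal.ofReal (Real.exp (-c * N)) := by
            gcongr
            · rw [← ENNReal.ofReal_toReal (measure_ne_top μ _)]
              exact ENNReal.ofReal_le_ofReal h1
            · rw [← ENNReal.ofReal_toReal (measure_ne_top μ _)]
              exact ENNReal.ofReal_le_ofReal h2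
        _ = ENNReal.ofReal (2 * Real.exp (-c * N)) := by
            rw [← ENNReal.ofReal_add (Real.exp_pos _).le (Real.exp_pos _).le]; ring_nf
    have hsummable : Summable (fun N : ℕ => 2 * Real.exp (-c * N)) := by
      refine (((summable_geometric_of_lt_one (Real.exp_pos (-c)).le
        (Real.exp_lt_one_iff.2 (by linarith))).mul_left 2)).congr fun N => ?_
      rw [mul_comm (-c) (N:ℝ), Real.exp_nat_mul]
    have hμsum : (∑' N, μ (B N)) ≠ ⊤ := by
      refine ne_top_of_le_ne_top ?_ (ENNReal.tsum_le_tsum hbound)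
      rw [← ENNReal.ofReal_tsum_of_nonneg (fun N => by positivity) hsummable]
      exact ENNReal.ofReal_ne_top
    have hlim := measure_limsup_atTop_eq_zero (μ := μ) hμsum
    rw [measure_eq_zero_iff_ae_notMem] at hlim
    filter_upwards [hlim] with ω hω
    rw [mem_limsup_iff_frequently_mem, not_frequently] at hω
    filter_upwards [hω] with N hN
    simpa [hB, not_le] using hN
  -- a.e. convergence of the fluctuation part
  have hae : ∀ᵐ ω ∂μ, ∀ k : ℕ, ∀ᶠ N in atTop, |T N ω| < (N:ℝ) * (1/(k+1)) :=
    ae_all_iff.2 fun k => hBC _ (by positivity)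
  -- mean convergence via the weak convergence hypothesis
  set L : ℝ := ∫ ρ', Real.exp (-((ρ' q).toReal)) ∂Λ with hL
  have hfb : ∀ x y : ℝ, dist (Real.exp (-|x|)) (Real.exp (-|y|)) ≤ 1 := by
    intro x y
    rw [Real.dist_eq]
    have h1 := Real.exp_pos (-|x|)
    have h2 := Real.exp_pos (-|y|)
    have h3 : Real.exp (-|x|) ≤ 1 := Real.exp_le_one_iff.2 (neg_nonpos.2 (abs_nonneg _))
    have h4 : Real.exp (-|y|) ≤ 1 := Real.exp_le_one_iff.2 (neg_nonpos.2 (abs_nonneg _))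
    rw [abs_le]; constructor <;> linarith
  set f : BoundedContinuousFunction ℝ ℝ :=
    BoundedContinuousFunction.mkOfBound
      ⟨fun x => Real.exp (-|x|), Real.continuous_exp.comp continuous_abs.neg⟩ 1 hfb with hf
  have hfval : ∀ x : ℝ, 0 ≤ x → f x = Real.exp (-x) := by
    intro x hx
    rw [show f x = Real.exp (-|x|) from rfl, abs_of_nonneg hx]
  have hptend : Tendsto (fun N : ℕ => (∑ i ∈ Finset.range N, p N i) / N) atTop (nhds L) := by
    have h := hweak f
    have h1 : (fun N : ℕ => (∑ i ∈ Finset.range N, f ((ρ N i q).toReal)) / N) =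
        fun N : ℕ => (∑ i ∈ Finset.range N, p N i) / N := by
      funext N; congr 1; exact Finset.sum_congr rfl fun i _ =>
        hfval _ ENNReal.toReal_nonneg
    have h2 : (∫ ρ', f ((ρ' q).toReal) ∂Λ) = L := by
      rw [hL]
      exact integral_congr_ae (ae_of_all _ fun ρ' => hfval _ ENNReal.toReal_nonneg)
    rwa [h1, h2] at h
  have hmean_tendsto : Tendsto (fun N : ℕ => (∑ i ∈ Finset.range N, (1 - p N i)) / N)
      atTop (nhds (1 - L)) := by
    refine (tendsto_const_nhds.sub hptend).congr' ?_
    filter_upwards [eventually_ge_atTop 1] with N hN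
    have hN0 : (N:ℝ) ≠ 0 := Nat.cast_ne_zero.2 (by omega)
    rw [Finset.sum_sub_distrib, Finset.sum_const, Finset.card_range, nsmul_eq_mul, mul_one,
      sub_div, div_self hN0]
  filter_upwards [hae] with ω hω
  have hdecomp : ∀ N : ℕ, (∑ i ∈ Finset.range N, X N i ω) / (N:ℝ) =
      T N ω / (N:ℝ) + (∑ i ∈ Finset.range N, (1 - p N i)) / N := by
    intro N
    have hTr : T N ω = ∑ i ∈ Finset.range N, (X N i ω - (1 - p N i)) := by
      simp only [hT]
      exact (Finset.sum_range (fun j => X N j ω - (1 - p N j))).symm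
    rw [hTr, ← add_div, Finset.sum_sub_distrib]
    congr 1
    ring
  have hT0 : Tendsto (fun N : ℕ => T N ω / (N:ℝ)) atTop (nhds 0) := by
    rw [NormedAddCommGroup.tendsto_nhds_zero]
    intro ε hε
    obtain ⟨k, hk⟩ := exists_nat_one_div_lt hε
    filter_upwards [hω k, eventually_ge_atTop 1] with N h1 h2
    have hN0 : (0:ℝ) < N := by exact_mod_cast Nat.lt_of_lt_of_le Nat.zero_lt_one h2
    rw [Real.norm_eq_abs, abs_div, abs_of_pos hN0, div_lt_iff₀ hN0, mul_comm ε ((N:ℝ))]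
    calc |T N ω| < (N:ℝ) * (1/(k+1)) := h1
    _ ≤ (N:ℝ) * ε := by
        apply mul_le_mul_of_nonneg_left _ hN0.le
        push_cast at hk ⊢
        linarith
  have := hT0.add hmean_tendsto
  rw [zero_add] at this
  exact this.congr fun N => (hdecomp N).symm
end
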